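/- Let q be a prime power and s an integer with 0 < s < q-2 and (s+2) dividing q. Let K be an (n, s+3)-arc in PG(3,q) with n = (s+1)(q+1) + 1. Then for any two distinct points P_i, P_j of K there is exactly one tangent plane of K containing both P_i and P_j. -/
import Mathlib


open scoped Classical

noncomputable section

/-- The number of points of the multiset `K` of projective points lying in the
submodule (flat) `W`, counted with multiplicity. -/
def mPointsOn {F V : Type*} [Field F] [AddCommGroup V] [Module F V]
    (K : Multiset (Projectivization F V)) (W : Submodule F V) : ℕ :=
  Multiset.card (K.filter (fun P => P.submodule ≤ W))

/-- The number of points of the finite set `K` of projective points lying in the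
submodule (flat) `W`. -/
def pointsOn {F V : Type*} [Field F] [AddCommGroup V] [Module F V]
    (K : Finset (Projectivization F V)) (W : Submodule F V) : ℕ :=
  (K.filter (fun P => P.submodule ≤ W)).card

/-- `W` is a hyperplane of the projective space `PG(V)`, i.e. a linear subspace of
codimension one (projective codimension one flat). -/
def IsHyp (F : Type*) [Field F] {V : Type*} [AddCommGroup V] [Module F V]
    (W : Submodule F V) : Prop :=
  Module.finrank F W = Module.finrank F V - 1

/-- An `(n, r)`-multi-arc: a multiset of `n > r` projective points such that every
hyperplane contains at most `r` of them (with multiplicity) and some hyperplane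
contains exactly `r` of them. -/
def IsMultiArc {F V : Type*} [Field F] [AddCommGroup V] [Module F V]
    (n r : ℕ) (K : Multiset (Projectivization F V)) : Prop :=
  Multiset.card K = n ∧ r < n ∧
    (∀ W : Submodule F V, IsHyp F W → mPointsOn K W ≤ r) ∧
    (∃ W : Submodule F V, IsHyp F W ∧ mPointsOn K W = r)

/-- An `(n, r)`-arc: a set of `n > r` projective points such that every hyperplane
contains at most `r` of them and some hyperplane contains exactly `r` of them. -/
def IsArc {F V : Type*} [Field F] [AddCommGroup V] [Module F V]
    (n r : ℕ) (K : Finset (Projectivization F V)) : Prop :=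
  K.card = n ∧ r < n ∧
    (∀ W : Submodule F V, IsHyp F W → pointsOn K W ≤ r) ∧
    (∃ W : Submodule F V, IsHyp F W ∧ pointsOn K W = r)

/-- A complete `(n, r)`-arc: one admitting no extension to an `(n+1, r)`-arc. -/
def IsCompleteArc {F V : Type*} [Field F] [AddCommGroup V] [Module F V]
    (n r : ℕ) (K : Finset (Projectivization F V)) : Prop :=
  IsArc n r K ∧ ∀ P ∉ K, ¬ IsArc (n + 1) r (insert P K)

/-- A hyperplane is a secant of the arc `K` (relative to the parameter `r`) if it
contains exactly `r` points of `K`. -/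
def IsSecant {F V : Type*} [Field F] [AddCommGroup V] [Module F V]
    (K : Finset (Projectivization F V)) (r : ℕ) (W : Submodule F V) : Prop :=
  IsHyp F W ∧ pointsOn K W = r

/-- A hyperplane is a tangent of the arc `K` (relative to the parameter `r`) if it
contains a positive number, fewer than `r`, of points of `K`. -/
def IsTangent {F V : Type*} [Field F] [AddCommGroup V] [Module F V]
    (K : Finset (Projectivization F V)) (r : ℕ) (W : Submodule F V) : Prop :=
  IsHyp F W ∧ 0 < pointsOn K W ∧ pointsOn K W < r

/-- `m^s(k,q)`: the maximum size of a complete `(n, k+s-1)`-arc in `PG(k-1,q)`,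
where the projective space is coordinatized over the field `F` of order `q`. -/
def mPow (F : Type*) [Field F] (k s : ℕ) : ℕ :=
  sSup {n | ∃ K : Finset (Projectivization F (Fin k → F)), IsCompleteArc n (k + s - 1) K}


section Aux
open Module Submodule

instance auxFiniteSubmodule {F V : Type*} [Field F] [AddCommGroup V] [Module F V]
    [Finite V] : Finite (Submodule F V) :=
  Finite.of_injective (fun W : Submodule F V => (W : Set V)) SetLike.coe_injective

noncomputable instance auxFintypeSubmodule {F V : Type*} [Field F] [AddCommGroup V]
    [Module F V] [Fintype V] : Fintype (Submodule F V) := Fintype.ofFinite _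

variable {F V : Type*} [Field F] [AddCommGroup V] [Module F V]

/-- rank of the image in the quotient. -/
lemma finrank_map_mkQ_add [FiniteDimensional F V] (L W : Submodule F V) (h : L ≤ W) :
    finrank F (W.map L.mkQ) + finrank F L = finrank F W := by
  have H := LinearMap.finrank_range_add_finrank_ker (L.mkQ.domRestrict W)
  rw [LinearMap.range_domRestrict, LinearMap.ker_domRestrict, Submodule.ker_mkQ] at H
  rw [← H]
  congr 1
  rw [← Submodule.finrank_map_subtype_eq W (comap W.subtype L), Submodule.map_comap_subtype,
    inf_eq_right.mpr h]

/-- number of 1-dimensional subspaces of a 2-dimensional space over a finite field. -/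
lemma card_lines [Fintype F] [Fintype V] (h2 : finrank F V = 2) :
    (Finset.univ.filter (fun H : Submodule F V => finrank F H = 1)).card
      = Fintype.card F + 1 := by
  haveI : FiniteDimensional F V := Module.finite_of_finrank_pos (by omega)
  set q := Fintype.card F with hq
  have hq2 : 2 ≤ q := Fintype.one_lt_card
  set T := Finset.univ.filter (fun H : Submodule F V => finrank F H = 1) with hT
  set B := Finset.univ.filter (fun v : V => v ≠ 0) with hB
  have hBcard : B.card = q ^ 2 - 1 := by
    have : B = Finset.univ \ {0} := by
      ext v; simp [hB]
    rw [this, Finset.card_sdiff_of_subset (by simp), Finset.card_singleton, Finset.card_univ,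
      card_eq_pow_finrank (K := F) (V := V), h2]
  have hfib : ∀ v ∈ B, (span F {v} : Submodule F V) ∈ T := by
    intro v hv
    simp only [hB, Finset.mem_filter] at hv
    simp only [hT, Finset.mem_filter, Finset.mem_univ, true_and]
    exact finrank_span_singleton hv.2
  have hsum := Finset.card_eq_sum_card_fiberwise hfib
  have hfibcard : ∀ H ∈ T, (B.filter (fun v => (span F {v} : Submodule F V) = H)).card = q - 1 := by
    intro H hH
    simp only [hT, Finset.mem_filter, Finset.mem_univ, true_and] at hH
    have heq : B.filter (fun v => (span F {v} : Submodule F V) = H)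
        = (Finset.univ.filter (fun v : V => v ∈ H)) \ {0} := by
      ext v
      simp only [hB, Finset.mem_filter, Finset.mem_sdiff, Finset.mem_univ, true_and,
        Finset.mem_singleton]
      constructor
      · rintro ⟨hv0, rfl⟩
        exact ⟨Submodule.mem_span_singleton_self v, hv0⟩
      · rintro ⟨hvH, hv0⟩
        refine ⟨hv0, ?_⟩
        apply Submodule.eq_of_le_of_finrank_eq
        · rwa [Submodule.span_singleton_le_iff_mem]
        · rw [finrank_span_singleton hv0, hH]
    rw [heq, Finset.card_sdiff_of_subset (by simp), Finset.card_singleton]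
    have : (Finset.univ.filter (fun v : V => v ∈ H)).card = Fintype.card H := by
      rw [Fintype.card_subtype]
    rw [this, card_eq_pow_finrank (K := F) (V := H), hH, pow_one]
  rw [Finset.sum_congr rfl hfibcard, Finset.sum_const, smul_eq_mul] at hsum
  -- hsum : B.card = T.card * (q - 1)
  have key : (q + 1) * (q - 1) + 1 = q ^ 2 := by
    obtain ⟨a, ha⟩ : ∃ a, q = a + 1 := ⟨q - 1, by omega⟩
    rw [ha, Nat.add_sub_cancel]; ring
  have h2' : T.card * (q - 1) = (q + 1) * (q - 1) := by omega
  exact Nat.eq_of_mul_eq_mul_right (by omega) h2'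


/-- The number of hyperplanes containing a fixed 2-dimensional subspace of a
4-dimensional space over a finite field is `q + 1`. -/
lemma card_hyps {F V : Type*} [Field F] [AddCommGroup V] [Module F V]
    [Fintype F] [Fintype V] (L : Submodule F V)
    (h4 : finrank F V = 4) (hL : finrank F L = 2) :
    (Finset.univ.filter (fun W : Submodule F V => L ≤ W ∧ IsHyp F W)).card
      = Fintype.card F + 1 := by
  haveI : FiniteDimensional F V := Module.finite_of_finrank_pos (by omega)
  haveI : Fintype (V ⧸ L) := Fintype.ofFinite _
  have hQ : finrank F (V ⧸ L) = 2 := by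
    rw [Submodule.finrank_quotient, h4, hL]
  rw [← card_lines (F := F) (V := V ⧸ L) hQ]
  apply Finset.card_bij (fun W _ => W.map L.mkQ)
  · intro W hW
    simp only [Finset.mem_filter, Finset.mem_univ, true_and] at hW ⊢
    have h3 : finrank F W = finrank F V - 1 := hW.2
    have := finrank_map_mkQ_add L W hW.1
    rw [hL, h3, h4] at this
    omega
  · intro W₁ h₁ W₂ h₂ heq
    simp only [Finset.mem_filter, Finset.mem_univ, true_and] at h₁ h₂
    have e₁ : comap L.mkQ (W₁.map L.mkQ) = W₁ := by
      rw [Submodule.comap_map_mkQ, sup_eq_right.mpr h₁.1]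
    have e₂ : comap L.mkQ (W₂.map L.mkQ) = W₂ := by
      rw [Submodule.comap_map_mkQ, sup_eq_right.mpr h₂.1]
    rw [← e₁, ← e₂, heq]
  · intro H hH
    simp only [Finset.mem_filter, Finset.mem_univ, true_and] at hH
    have hmap : (comap L.mkQ H).map L.mkQ = H :=
      Submodule.map_comap_eq_of_surjective (Submodule.mkQ_surjective L) H
    have hle : L ≤ comap L.mkQ H := by
      intro x hx
      have hx0 : L.mkQ x = 0 := (Submodule.Quotient.mk_eq_zero L).mpr hx
      simp only [Submodule.mem_comap, hx0]
      exact H.zero_mem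
    refine ⟨comap L.mkQ H, ?_, hmap⟩
    simp only [Finset.mem_filter, Finset.mem_univ, true_and]
    refine ⟨hle, ?_⟩
    have := finrank_map_mkQ_add L (comap L.mkQ H) hle
    rw [hmap, hH, hL] at this
    show finrank F (comap L.mkQ H) = finrank F V - 1
    omega

end Aux


/-- In `PG(3,q)`, for an `((s+1)(q+1)+1, s+3)`-arc `K` with `0 < s < q-2` and
`(s+2) ∣ q`, any two distinct points of `K` lie on exactly one common tangent plane
of `K`. -/
theorem stmt10 {F : Type*} [Field F] [Fintype F] {q s n : ℕ}
    (hq : Fintype.card F = q) (hs0 : 0 < s) (hs : s < q - 2)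
    (hdvd : (s + 2) ∣ q)
    (K : Finset (Projectivization F (Fin 4 → F)))
    (hn : n = (s + 1) * (q + 1) + 1)
    (hK : IsArc n (s + 3) K)
    (Pi Pj : Projectivization F (Fin 4 → F)) (hPi : Pi ∈ K) (hPj : Pj ∈ K)
    (hne : Pi ≠ Pj) :
    ∃! H : Submodule F (Fin 4 → F),
      IsTangent K (s + 3) H ∧ Pi.submodule ≤ H ∧ Pj.submodule ≤ H := by
  classical
  subst hq
  set q := Fintype.card F with hq
  have hq2 : 2 ≤ q := Fintype.one_lt_card
  have h4 : Module.finrank F (Fin 4 → F) = 4 := Module.finrank_fin_fun F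
  haveI : FiniteDimensional F (Fin 4 → F) := Module.finite_of_finrank_pos (by omega)
  obtain ⟨hcard, hrn, hmax, -⟩ := hK
  -- the line through the two points
  have hsubne : Pi.submodule ≠ Pj.submodule :=
    fun h => hne (Projectivization.submodule_injective h)
  set L := Pi.submodule ⊔ Pj.submodule with hLdef
  have hinf : Pi.submodule ⊓ Pj.submodule = ⊥ := by
    by_contra hbot
    obtain ⟨x, hx, hx0⟩ := Submodule.exists_mem_ne_zero_of_ne_bot hbot
    obtain ⟨hx1, hx2⟩ := Submodule.mem_inf.mp hx
    have hxi : Submodule.span F {x} = Pi.submodule :=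
      Submodule.eq_of_le_of_finrank_eq
        ((Submodule.span_singleton_le_iff_mem x _).mpr hx1)
        (by rw [finrank_span_singleton hx0, Pi.finrank_submodule])
    have hxj : Submodule.span F {x} = Pj.submodule :=
      Submodule.eq_of_le_of_finrank_eq
        ((Submodule.span_singleton_le_iff_mem x _).mpr hx2)
        (by rw [finrank_span_singleton hx0, Pj.finrank_submodule])
    exact hsubne (hxi ▸ hxj)
  have hLrank : Module.finrank F L = 2 := by
    have := Submodule.finrank_sup_add_finrank_inf_eq Pi.submodule Pj.submodule
    rw [hinf, finrank_bot, Pi.finrank_submodule, Pj.finrank_submodule] at this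
    rw [hLdef]
    omega
  -- the pencil of hyperplanes through the line
  set S := Finset.univ.filter (fun W : Submodule F (Fin 4 → F) => L ≤ W ∧ IsHyp F W)
    with hSdef
  have hScard : S.card = q + 1 := card_hyps L h4 hLrank
  have hmemS : ∀ W ∈ S, L ≤ W ∧ IsHyp F W := by
    intro W hW
    simpa only [hSdef, Finset.mem_filter, Finset.mem_univ, true_and] using hW
  -- bounds on points in each plane of the pencil
  have hfle : ∀ W ∈ S, pointsOn K W ≤ s + 3 := fun W hW => hmax W (hmemS W hW).2
  have hfge : ∀ W ∈ S, 2 ≤ pointsOn K W := by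
    intro W hW
    apply Finset.one_lt_card.mpr
    exact ⟨Pi, Finset.mem_filter.mpr ⟨hPi, le_trans le_sup_left (hmemS W hW).1⟩,
      Pj, Finset.mem_filter.mpr ⟨hPj, le_trans le_sup_right (hmemS W hW).1⟩, hne⟩
  -- each point of K off the line lies on a unique plane of the pencil
  have hpt : ∀ P ∈ K, (S.filter (fun W => P.submodule ≤ W)).card
      = if P.submodule ≤ L then q + 1 else 1 := by
    intro P _
    split_ifs with hPL
    · rw [Finset.filter_eq_self.mpr (fun W hW => le_trans hPL (hmemS W hW).1), hScard]
    · have hWrank : Module.finrank F ↥(L ⊔ P.submodule) = 3 := by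
        have hi : L ⊓ P.submodule = ⊥ := by
          by_contra hbot
          obtain ⟨x, hx, hx0⟩ := Submodule.exists_mem_ne_zero_of_ne_bot hbot
          obtain ⟨hx1, hx2⟩ := Submodule.mem_inf.mp hx
          have hxP : Submodule.span F {x} = P.submodule :=
            Submodule.eq_of_le_of_finrank_eq
              ((Submodule.span_singleton_le_iff_mem x _).mpr hx2)
              (by rw [finrank_span_singleton hx0, P.finrank_submodule])
          exact hPL (hxP ▸ (Submodule.span_singleton_le_iff_mem x _).mpr hx1)
        have := Submodule.finrank_sup_add_finrank_inf_eq L P.submodule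
        rw [hi, finrank_bot, hLrank, P.finrank_submodule] at this
        omega
      have hsingle : S.filter (fun W => P.submodule ≤ W) = {L ⊔ P.submodule} := by
        apply Finset.eq_singleton_iff_unique_mem.mpr
        constructor
        · simp only [hSdef, Finset.mem_filter, Finset.mem_univ, true_and]
          refine ⟨⟨le_sup_left, ?_⟩, le_sup_right⟩
          show Module.finrank F ↥(L ⊔ P.submodule) = Module.finrank F (Fin 4 → F) - 1
          rw [hWrank, h4]
        · intro W hW
          simp only [hSdef, Finset.mem_filter, Finset.mem_univ, true_and] at hW
          obtain ⟨⟨hLW, hHyp⟩, hPW⟩ := hW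
          have hW3 : Module.finrank F ↥W = Module.finrank F (Fin 4 → F) - 1 := hHyp
          exact (Submodule.eq_of_le_of_finrank_eq (sup_le hLW hPW)
            (by rw [hWrank, hW3, h4])).symm
      rw [hsingle, Finset.card_singleton]
  -- double counting
  set t := pointsOn K L with htdef
  have hswap : ∑ W ∈ S, pointsOn K W = t * (q + 1) + (n - t) := by
    have e1 : ∑ W ∈ S, pointsOn K W
        = ∑ P ∈ K, (S.filter (fun W => P.submodule ≤ W)).card := by
      simp only [pointsOn, Finset.card_filter]
      exact Finset.sum_comm
    rw [e1, Finset.sum_congr rfl hpt, Finset.sum_ite, Finset.sum_const, Finset.sum_const,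
      smul_eq_mul, smul_eq_mul, mul_one]
    have ht : (K.filter (fun P => P.submodule ≤ L)).card = t := rfl
    rw [ht]
    congr 1
    rw [← hcard]
    have h2 := Finset.card_filter_add_card_filter_not
      (s := K) (p := fun P => P.submodule ≤ L)
    rw [ht] at h2
    omega
  have htge : 2 ≤ t := by
    apply Finset.one_lt_card.mpr
    exact ⟨Pi, Finset.mem_filter.mpr ⟨hPi, le_sup_left⟩,
      Pj, Finset.mem_filter.mpr ⟨hPj, le_sup_right⟩, hne⟩
  have htn : t ≤ n := by rw [← hcard]; exact Finset.card_filter_le _ _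
  have hexpand : (q + 1) * (s + 3) = n + 2 * q + 1 := by rw [hn]; ring
  have hub : ∑ W ∈ S, pointsOn K W ≤ (q + 1) * (s + 3) := by
    calc ∑ W ∈ S, pointsOn K W ≤ ∑ _W ∈ S, (s + 3) := Finset.sum_le_sum hfle
    _ = (q + 1) * (s + 3) := by rw [Finset.sum_const, smul_eq_mul, hScard]
  have ht2 : t = 2 := by
    have h1 : t * (q + 1) + (n - t) ≤ n + 2 * q + 1 := by
      rw [← hswap, ← hexpand]; exact hub
    have e : t * (q + 1) = t * q + t := by ring
    rw [e] at h1
    have htq : t * q ≤ 2 * q + 1 := by omega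
    by_contra hne2
    have h3 : 3 ≤ t := by omega
    have := Nat.mul_le_mul_right q h3
    omega
  have hsumval : ∑ W ∈ S, pointsOn K W = n + 2 * q := by
    rw [hswap, ht2]
    have hn4 : 4 ≤ n := by omega
    omega
  -- exactly one plane of the pencil is tangent
  have hgsum : ∑ W ∈ S, (s + 3 - pointsOn K W) = 1 := by
    have e : ∑ W ∈ S, pointsOn K W + ∑ W ∈ S, (s + 3 - pointsOn K W)
        = (q + 1) * (s + 3) := by
      rw [← Finset.sum_add_distrib]
      rw [Finset.sum_congr rfl (fun W hW => Nat.add_sub_cancel' (hfle W hW)),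
        Finset.sum_const, smul_eq_mul, hScard]
    rw [hexpand, hsumval] at e
    omega
  obtain ⟨W₀, hW₀S, hgW₀⟩ : ∃ W ∈ S, 0 < s + 3 - pointsOn K W := by
    by_contra hcon
    push_neg at hcon
    have : ∑ W ∈ S, (s + 3 - pointsOn K W) = 0 :=
      Finset.sum_eq_zero (fun W hW => by have := hcon W hW; omega)
    omega
  have huniq : ∀ W ∈ S, 0 < s + 3 - pointsOn K W → W = W₀ := by
    intro W hWS hgW
    by_contra hne'
    have hpair : ({W, W₀} : Finset (Submodule F (Fin 4 → F))) ⊆ S := by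
      intro x hx
      rcases Finset.mem_insert.mp hx with rfl | hx
      · exact hWS
      · rw [Finset.mem_singleton.mp hx]; exact hW₀S
    have hle' := Finset.sum_le_sum_of_subset (f := fun W => s + 3 - pointsOn K W) hpair
    rw [Finset.sum_pair hne', hgsum] at hle'
    omega
  -- conclusion
  refine ⟨W₀, ⟨⟨(hmemS W₀ hW₀S).2, ?_, by omega⟩,
    le_trans le_sup_left (hmemS W₀ hW₀S).1, le_trans le_sup_right (hmemS W₀ hW₀S).1⟩, ?_⟩
  · have := hfge W₀ hW₀S; omega
  · rintro H ⟨⟨hHhyp, -, hHlt⟩, hHi, hHj⟩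
    have hHS : H ∈ S := by
      simp only [hSdef, Finset.mem_filter, Finset.mem_univ, true_and]
      exact ⟨sup_le hHi hHj, hHhyp⟩
    exact huniq H hHS (by omega)


end
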